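/- With the assignment m({x₀, x}) = 1/k for each x ∈ A (|A| = k ≥ 2, x₀ ∉ A) and m(C)=0 otherwise, the pignistic probability satisfies P_Bel(x) = 1/(2k) for x ∈ A, P_Bel(x₀) = 1/2, and P_Bel(x) = 0 otherwise; in particular the unique maximizer of P_Bel is x₀, which lies outside A. -/

import Mathlib

open Finset

/-- With `m {x₀, x} = 1/k` for `x ∈ A` (`|A| = k ≥ 2`, `x₀ ∉ A`) and `m = 0`
elsewhere, the pignistic probability equals `1/(2k)` on `A`, `1/2` at `x₀`,
and `0` elsewhere; in particular `x₀` is its unique maximizer. -/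
theorem stmt12 {α : Type*} [Fintype α] [DecidableEq α]
    (m : Finset α → ℝ) (A : Finset α) (x₀ : α)
    (hX : 3 ≤ Fintype.card α) (hA : 2 ≤ A.card) (hx₀ : x₀ ∉ A)
    (hm1 : ∀ x ∈ A, m {x₀, x} = 1 / (A.card : ℝ))
    (hm0 : ∀ C : Finset α, (∀ x ∈ A, C ≠ {x₀, x}) → m C = 0)
    (PBel : α → ℝ)
    (hPBel : ∀ x : α, PBel x =
      ∑ B ∈ (Finset.univ : Finset α).powerset.filter (fun B => x ∈ B),
        m B / B.card) :
    (∀ x ∈ A, PBel x = 1 / (2 * (A.card : ℝ))) ∧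
    PBel x₀ = 1 / 2 ∧
    (∀ x : α, x ∉ A → x ≠ x₀ → PBel x = 0) ∧
    (∀ x : α, x ≠ x₀ → PBel x < PBel x₀) := by
  have kpos : (0 : ℝ) < (A.card : ℝ) := by
    have : 0 < A.card := by omega
    exact_mod_cast this
  -- part 1
  have h1 : ∀ x ∈ A, PBel x = 1 / (2 * (A.card : ℝ)) := by
    intro x hx
    have hxne : x ≠ x₀ := fun h => hx₀ (h ▸ hx)
    rw [hPBel x]
    rw [Finset.sum_eq_single_of_mem ({x₀, x} : Finset α)]
    · have hcard : ({x₀, x} : Finset α).card = 2 := by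
        rw [Finset.card_insert_of_notMem (by simp [hxne.symm]), Finset.card_singleton]
      rw [hm1 x hx, hcard]
      push_cast
      field_simp
    · simp [Finset.mem_filter]
    · intro B _ hBne
      have hB0 : m B = 0 := by
        apply hm0
        intro y hy hEq
        -- B = {x₀, y}, x ∈ B
        have hxB : x ∈ B := by
          have := Finset.mem_filter.mp ‹B ∈ _›
          exact this.2
        rw [hEq] at hxB
        simp only [Finset.mem_insert, Finset.mem_singleton] at hxB
        rcases hxB with h | h
        · exact hxne h
        · exact hBne (by rw [hEq, h])
      rw [hB0]; simp
  have h2 : PBel x₀ = 1 / 2 := by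
    rw [hPBel x₀]
    have hsub : A.image (fun y => ({x₀, y} : Finset α)) ⊆
        (Finset.univ : Finset α).powerset.filter (fun B => x₀ ∈ B) := by
      intro B hB
      simp only [Finset.mem_image] at hB
      obtain ⟨y, _, rfl⟩ := hB
      simp [Finset.mem_filter]
    rw [← Finset.sum_subset hsub]
    · rw [Finset.sum_image]
      · have : ∀ y ∈ A, m {x₀, y} / (({x₀, y} : Finset α).card : ℝ)
            = 1 / (2 * (A.card : ℝ)) := by
          intro y hy
          have hyne : y ≠ x₀ := fun h => hx₀ (h ▸ hy)
          have hcard : ({x₀, y} : Finset α).card = 2 := by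
            rw [Finset.card_insert_of_notMem (by simp [hyne.symm]), Finset.card_singleton]
          rw [hm1 y hy, hcard]
          push_cast; field_simp
        rw [Finset.sum_congr rfl this, Finset.sum_const, nsmul_eq_mul]
        field_simp
      · intro y hy z hz hEq
        have hyne : y ≠ x₀ := fun h => hx₀ (h ▸ hy)
        have : y ∈ ({x₀, z} : Finset α) := (show ({x₀, y} : Finset α) = {x₀, z} from hEq) ▸ (by simp : y ∈ ({x₀, y} : Finset α))
        simp only [Finset.mem_insert, Finset.mem_singleton] at this
        tauto
    · intro B hB hBnot
      have : m B = 0 := by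
        apply hm0
        intro y hy hEq
        exact hBnot (Finset.mem_image.mpr ⟨y, hy, hEq.symm⟩)
      rw [this]; simp
  refine ⟨h1, h2, ?_, ?_⟩
  · intro x hxA hxne
    rw [hPBel x]
    apply Finset.sum_eq_zero
    intro B hB
    have hxB : x ∈ B := (Finset.mem_filter.mp hB).2
    have : m B = 0 := by
      apply hm0
      intro y hy hEq
      rw [hEq] at hxB
      simp only [Finset.mem_insert, Finset.mem_singleton] at hxB
      rcases hxB with h | h
      · exact hxne h
      · exact hxA (h ▸ hy)
    rw [this]; simp
  · intro x hxne
    rw [h2]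
    by_cases hxA : x ∈ A
    · rw [h1 x hxA]
      rw [div_lt_div_iff₀ (by positivity) (by norm_num)]
      have : (2:ℝ) ≤ (A.card : ℝ) := by exact_mod_cast hA
      nlinarith
    · have : PBel x = 0 := by
        rw [hPBel x]
        apply Finset.sum_eq_zero
        intro B hB
        have hxB : x ∈ B := (Finset.mem_filter.mp hB).2
        have : m B = 0 := by
          apply hm0
          intro y hy hEq
          rw [hEq] at hxB
          simp only [Finset.mem_insert, Finset.mem_singleton] at hxB
          rcases hxB with h | h
          · exact hxne h
          · exact hxA (h ▸ hy)
        rw [this]; simp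
      rw [this]; norm_num
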